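/- Let T : c₀ ⇉ ℓ¹ have graph {(−G(y), y) : y ∈ ℓ¹, ∑_i y_i = 0} and let T̃ : ℓ∞ ⇉ ℓ¹ be its Gossez monotone closure: graph(T̃) = {(z, y) ∈ ℓ∞ × ℓ¹ : ⟨z − x', y − y'⟩ ≥ 0 for all (x', y') ∈ graph(T)}. If ỹ ∈ ℓ¹ with ∑_i ỹ_i > 0, then for every τ > 0 the pair (x^τ, τỹ) with x^τ = −G(τỹ) + (1/τ)e lies in graph(T̃). -/

import Mathlib

open Filter Topology

/-- The Gossez operator, with sequences indexed from `0`: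
entry `n` (paper index `n+1`) is `∑_{i ≥ n+1} y i − ∑_{i ≤ n-1} y i`. -/
noncomputable def G (y : ℕ → ℝ) (n : ℕ) : ℝ :=
  (∑' i : ℕ, y (n + 1 + i)) - ∑ i ∈ Finset.range n, y i

lemma G_eq (y : ℕ → ℝ) (hy : Summable y) (n : ℕ) :
    G y n = (∑' i, y i) - (∑ i ∈ Finset.range (n + 1), y i) - ∑ i ∈ Finset.range n, y i := by
  unfold G
  have h1 : (∑' i : ℕ, y (n + 1 + i)) = ∑' i : ℕ, y (i + (n + 1)) := by
    congr 1; funext i; rw [Nat.add_comm]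
  have h2 := Summable.sum_add_tsum_nat_add (f := y) (n + 1) hy
  rw [h1]
  linarith

/-- For `ytil ∈ l1` with `∑ i, ytil i > 0` and `τ > 0`, the pair `(x^τ, τ • ytil)` with
`x^τ = -G (τ • ytil) + (1/τ) e` lies in the Gossez monotone closure of `T`. -/
theorem extension_point_in_closure (ytil : ℕ → ℝ) (τ : ℝ)
    (hytil : Summable fun i => |ytil i|) (hpos : 0 < ∑' i, ytil i) (hτ : 0 < τ) :
    ∀ y' : ℕ → ℝ, Summable (fun i => |y' i|) → (∑' i, y' i) = 0 →
      ∑' n, ((-G (fun i => τ * ytil i) n + 1 / τ) - (-G y' n)) *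
        (τ * ytil n - y' n) ≥ 0 := by
  intro y' hy' hsum0
  set u : ℕ → ℝ := fun i => τ * ytil i with hu
  have hyt : Summable ytil := summable_abs_iff.mp hytil
  have hu_summ : Summable u := hyt.mul_left τ
  have hy'_summ : Summable y' := summable_abs_iff.mp hy'
  set d : ℕ → ℝ := fun i => u i - y' i with hd
  have hd_summ : Summable d := hu_summ.sub hy'_summ
  set D : ℝ := ∑' i, d i with hD
  have hDval : D = τ * ∑' i, ytil i := by
    rw [hD]
    rw [Summable.tsum_sub hu_summ hy'_summ, hsum0, sub_zero, hu, tsum_mul_left]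
  have hDpos : 0 < D := by rw [hDval]; positivity
  set P : ℕ → ℝ := fun n => ∑ i ∈ Finset.range n, d i with hP
  have hPlim : Tendsto P atTop (𝓝 D) := hd_summ.hasSum.tendsto_sum_nat
  set Term : ℕ → ℝ := fun n =>
    ((-G u n + 1 / τ) - (-G y' n)) * (u n - y' n) with hTerm
  have hSu : (∑' i, u i) = D := by
    rw [hD, Summable.tsum_sub hu_summ hy'_summ, hsum0, sub_zero]
  have key : ∀ n, Term n = (P (n + 1) ^ 2 - P n ^ 2) + (1 / τ - D) * d n := by
    intro n
    rw [hTerm]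
    simp only
    rw [G_eq u hu_summ n, G_eq y' hy'_summ n, hsum0, hSu]
    have h1 : P (n + 1) = (∑ i ∈ Finset.range (n + 1), u i)
        - ∑ i ∈ Finset.range (n + 1), y' i := by
      rw [hP]; simp [hd, Finset.sum_sub_distrib]
    have h2 : P n = (∑ i ∈ Finset.range n, u i) - ∑ i ∈ Finset.range n, y' i := by
      rw [hP]; simp [hd, Finset.sum_sub_distrib]
    have h3 : (∑ i ∈ Finset.range (n + 1), u i) = (∑ i ∈ Finset.range n, u i) + u n :=
      Finset.sum_range_succ u n
    have h4 : (∑ i ∈ Finset.range (n + 1), y' i) = (∑ i ∈ Finset.range n, y' i) + y' n :=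
      Finset.sum_range_succ y' n
    have h5 : d n = u n - y' n := rfl
    rw [h1, h2, h3, h4, h5]
    ring
  by_cases hsummable : Summable Term
  · have htend : Tendsto (fun N => ∑ n ∈ Finset.range N, Term n) atTop (𝓝 (∑' n, Term n)) :=
      hsummable.hasSum.tendsto_sum_nat
    have hps : ∀ N, ∑ n ∈ Finset.range N, Term n = P N ^ 2 + (1 / τ - D) * P N := by
      intro N
      rw [Finset.sum_congr rfl fun n _ => key n, Finset.sum_add_distrib,
        Finset.sum_range_sub (fun n => P n ^ 2), ← Finset.mul_sum]
      have hP0 : P 0 = 0 := by simp [hP]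
      rw [hP0]
      ring_nf
      simp only [hP]
      ring
    have htend2 : Tendsto (fun N => ∑ n ∈ Finset.range N, Term n) atTop
        (𝓝 (D ^ 2 + (1 / τ - D) * D)) := by
      simp only [hps]
      exact ((hPlim.pow 2).add (tendsto_const_nhds.mul hPlim))
    have hval : (∑' n, Term n) = D ^ 2 + (1 / τ - D) * D :=
      tendsto_nhds_unique htend htend2
    have : (∑' n, Term n) ≥ 0 := by
      rw [hval]
      have : D ^ 2 + (1 / τ - D) * D = D / τ := by ring
      rw [this]
      positivity
    exact this
  · rw [show (∑' n, ((-G (fun i => τ * ytil i) n + 1 / τ) - (-G y' n)) *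
        (τ * ytil n - y' n)) = ∑' n, Term n from rfl,
      tsum_eq_zero_of_not_summable hsummable]
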